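/- arXiv:2110.13147 — 2 statements merged into one kernel-verified Lean document; each statement's English description precedes it below -/
import Mathlib

section
/- Let α ∈ (0,1], T > 0, and let f : [0,T] × ℝ → ℝ be continuous and satisfy the Lipschitz condition. Then for every x₀ ∈ ℝ there exists exactly one continuous function x : [0,T] → ℝ satisfying x(t) = x₀ + (1/Γ(α)) ∫₀ᵗ (t−s)^{α−1} f(s, x(s)) ds for all t ∈ [0,T]. -/
open Set intervalIntegral

open MeasureTheory

lemma ker_intable {α : ℝ} (hα : 0 < α) :
    IntervalIntegrable (fun u : ℝ => (1 - u) ^ (α - 1)) volume 0 1 := by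
  have h : IntervalIntegrable (fun x : ℝ => x ^ (α - 1)) volume 0 1 :=
    intervalIntegrable_rpow' (by linarith)
  simpa using (h.comp_sub_left 1).symm

lemma prod_intable {α : ℝ} (hα : 0 < α) {g : ℝ → ℝ} (hg : Continuous g) (t : ℝ) :
    IntervalIntegrable (fun u : ℝ => (1 - u) ^ (α - 1) * g (t * u)) volume 0 1 := by
  obtain ⟨M, hM⟩ := (isCompact_Icc (a := (0:ℝ)) (b := 1)).exists_bound_of_continuousOn
    (hg.comp (continuous_const.mul continuous_id)).continuousOn
  refine ((ker_intable hα).mul_const M).mono_fun ?_ ?_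
  · apply Measurable.aestronglyMeasurable
    fun_prop
  · filter_upwards [ae_restrict_mem measurableSet_uIoc] with u hu
    rw [Set.uIoc_of_le (zero_le_one)] at hu
    have h1 : |g (t * u)| ≤ M := by simpa using hM u ⟨hu.1.le, hu.2⟩
    have : M ≤ |M| := le_abs_self M
    simp only [Real.norm_eq_abs, abs_mul]
    exact mul_le_mul_of_nonneg_left (h1.trans this) (abs_nonneg _)

lemma subst_lemma {α : ℝ} (hα : 0 < α) (g : ℝ → ℝ) {t : ℝ} (ht : 0 ≤ t) :
    ∫ s in (0:ℝ)..t, (t - s) ^ (α - 1) * g s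
      = t ^ α * ∫ u in (0:ℝ)..1, (1 - u) ^ (α - 1) * g (t * u) := by
  rcases ht.eq_or_lt with h | h
  · simp [← h, Real.zero_rpow hα.ne']
  · have h1 := intervalIntegral.smul_integral_comp_mul_left
      (f := fun s => (t - s) ^ (α - 1) * g s) (c := t) (a := 0) (b := 1)
    simp only [mul_zero, mul_one, smul_eq_mul] at h1
    rw [← h1]
    have h2 : (∫ u in (0:ℝ)..1, (t - t * u) ^ (α - 1) * g (t * u))
        = ∫ u in (0:ℝ)..1, t ^ (α - 1) * ((1 - u) ^ (α - 1) * g (t * u)) := by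
      apply intervalIntegral.integral_congr
      intro u hu
      dsimp only
      rw [Set.uIcc_of_le zero_le_one] at hu
      have h3 : t - t * u = t * (1 - u) := by ring
      rw [h3, Real.mul_rpow ht (by linarith [hu.2])]
      ring
    rw [h2, intervalIntegral.integral_const_mul, ← mul_assoc]
    congr 1
    rw [show α = 1 + (α - 1) by ring, Real.rpow_add h, Real.rpow_one]
    ring_nf

lemma cont_G {α : ℝ} (hα : 0 < α) {g : ℝ → ℝ} (hg : Continuous g) :
    Continuous fun t : ℝ => ∫ u in (0:ℝ)..1, (1 - u) ^ (α - 1) * g (t * u) := by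
  rw [continuous_iff_continuousAt]
  intro t₀
  have key : ∀ t : ℝ, (∫ u in (0:ℝ)..1, (1 - u) ^ (α - 1) * g (t * u))
      = ∫ u in Ioc (0:ℝ) 1, (1 - u) ^ (α - 1) * g (t * u) ∂volume :=
    fun t => intervalIntegral.integral_of_le zero_le_one
  simp only [key]
  obtain ⟨M, hM⟩ := (isCompact_Icc (a := -(|t₀|+1)) (b := |t₀|+1)).exists_bound_of_continuousOn
    hg.continuousOn
  apply MeasureTheory.continuousAt_of_dominated
    (bound := fun u => (1 - u) ^ (α - 1) * M)
  · filter_upwards with t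
    apply Measurable.aestronglyMeasurable
    fun_prop
  · filter_upwards [Metric.ball_mem_nhds t₀ one_pos] with t hti
    filter_upwards [ae_restrict_mem measurableSet_Ioc] with u hu
    have htu : t * u ∈ Icc (-(|t₀|+1)) (|t₀|+1) := by
      have h1 : |t| ≤ |t₀| + 1 := by
        have := abs_sub_abs_le_abs_sub t t₀
        have h2 : |t - t₀| < 1 := by simpa [Real.dist_eq] using hti
        linarith
      have h2 : |t * u| ≤ |t₀| + 1 := by
        rw [abs_mul]
        calc |t| * |u| ≤ |t| * 1 := by
              apply mul_le_mul_of_nonneg_left _ (abs_nonneg _)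
              rw [abs_le]; constructor <;> linarith [hu.1.le, hu.2]
          _ ≤ |t₀| + 1 := by simpa using h1
      exact abs_le.mp h2
    have hgb : |g (t * u)| ≤ M := by simpa using hM _ htu
    have hker : (0:ℝ) ≤ (1 - u) ^ (α - 1) := Real.rpow_nonneg (by linarith [hu.2]) _
    rw [Real.norm_eq_abs, abs_mul, abs_of_nonneg hker]
    exact mul_le_mul_of_nonneg_left hgb hker
  · exact ((ker_intable hα).mul_const M).1
  · filter_upwards with u
    exact (continuous_const.mul (hg.comp (continuous_id.mul continuous_const))).continuousAt

lemma gamma_tail {α : ℝ} (hα : 0 < α) {X : ℝ} (hX : 0 ≤ X) :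
    ∫ v in (0:ℝ)..X, Real.exp (-v) * v ^ (α - 1) ≤ Real.Gamma α := by
  rw [Real.Gamma_eq_integral hα, intervalIntegral.integral_of_le hX]
  apply MeasureTheory.setIntegral_mono_set (Real.GammaIntegral_convergent hα)
  · filter_upwards [ae_restrict_mem measurableSet_Ioi] with v hv
    exact mul_nonneg (Real.exp_nonneg _) (Real.rpow_nonneg (le_of_lt hv) _)
  · exact (Ioc_subset_Ioi_self).eventuallyLE

lemma exp_kernel_bound {α : ℝ} (hα : 0 < α) {lam t : ℝ} (hlam : 0 < lam) (ht : 0 ≤ t) :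
    ∫ s in (0:ℝ)..t, (t - s) ^ (α - 1) * Real.exp (lam * s)
      ≤ Real.exp (lam * t) * Real.Gamma α / lam ^ α := by
  have step1 : (∫ s in (0:ℝ)..t, (t - s) ^ (α - 1) * Real.exp (lam * s))
      = Real.exp (lam * t) * ∫ s in (0:ℝ)..t,
          Real.exp (-(lam * (t - s))) * (t - s) ^ (α - 1) := by
    rw [← intervalIntegral.integral_const_mul]
    apply intervalIntegral.integral_congr
    intro s _
    dsimp only
    rw [show Real.exp (lam * s) = Real.exp (lam * t) * Real.exp (-(lam * (t - s))) by
      rw [← Real.exp_add]; congr 1; ring]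
    ring
  have step2 : (∫ s in (0:ℝ)..t, Real.exp (-(lam * (t - s))) * (t - s) ^ (α - 1))
      = ∫ u in (0:ℝ)..t, Real.exp (-(lam * u)) * u ^ (α - 1) := by
    have := intervalIntegral.integral_comp_sub_left
      (f := fun u => Real.exp (-(lam * u)) * u ^ (α - 1)) (a := 0) (b := t) t
    simpa using this
  have step3 : lam ^ α * (∫ u in (0:ℝ)..t, Real.exp (-(lam * u)) * u ^ (α - 1))
      = ∫ v in (0:ℝ)..(lam * t), Real.exp (-v) * v ^ (α - 1) := by
    have h1 := intervalIntegral.smul_integral_comp_mul_left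
      (f := fun v => Real.exp (-v) * v ^ (α - 1)) (c := lam) (a := 0) (b := t)
    simp only [mul_zero, smul_eq_mul] at h1
    rw [← h1]
    have h2 : (∫ u in (0:ℝ)..t, Real.exp (-(lam * u)) * (lam * u) ^ (α - 1))
        = ∫ u in (0:ℝ)..t, lam ^ (α - 1) * (Real.exp (-(lam * u)) * u ^ (α - 1)) := by
      apply intervalIntegral.integral_congr
      intro u hu
      dsimp only
      rw [Set.uIcc_of_le ht] at hu
      rw [Real.mul_rpow hlam.le hu.1]
      ring
    rw [h2, intervalIntegral.integral_const_mul, ← mul_assoc]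
    congr 1
    rw [show α = 1 + (α - 1) by ring, Real.rpow_add hlam, Real.rpow_one]
    ring_nf
  have step4 : (∫ v in (0:ℝ)..(lam * t), Real.exp (-v) * v ^ (α - 1)) ≤ Real.Gamma α :=
    gamma_tail hα (mul_nonneg hlam.le ht)
  have hlamα : (0:ℝ) < lam ^ α := Real.rpow_pos_of_pos hlam _
  have h5 : (∫ u in (0:ℝ)..t, Real.exp (-(lam * u)) * u ^ (α - 1)) ≤ Real.Gamma α / lam ^ α := by
    rw [le_div_iff₀ hlamα]
    calc (∫ u in (0:ℝ)..t, Real.exp (-(lam * u)) * u ^ (α - 1)) * lam ^ α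
        = lam ^ α * ∫ u in (0:ℝ)..t, Real.exp (-(lam * u)) * u ^ (α - 1) := by ring
      _ ≤ Real.Gamma α := step3 ▸ step4
  rw [step1, step2, mul_div_assoc]
  exact mul_le_mul_of_nonneg_left h5 (Real.exp_nonneg _)


lemma cont_body {α : ℝ} (hα : 0 < α) {T : ℝ} (x₀ c lam : ℝ) {g : ℝ → ℝ}
    (hg : Continuous g) :
    Continuous fun τ : Set.Icc (0:ℝ) T => Real.exp (-(lam * ↑τ)) *
      (x₀ + c * ∫ s in (0:ℝ)..(↑τ:ℝ), ((↑τ:ℝ) - s) ^ (α - 1) * g s) := by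
  have h2 : Continuous fun t : ℝ => Real.exp (-(lam * t)) *
      (x₀ + c * (t ^ α * ∫ u in (0:ℝ)..1, (1 - u) ^ (α - 1) * g (t * u))) := by
    apply Continuous.mul
    · exact Real.continuous_exp.comp (continuous_const.mul continuous_id).neg
    · refine continuous_const.add (continuous_const.mul (Continuous.mul ?_ (cont_G hα hg)))
      exact continuous_iff_continuousAt.mpr fun x => Real.continuousAt_rpow_const x α (Or.inr hα.le)
  have h1 : ContinuousOn (fun t : ℝ => Real.exp (-(lam * t)) *
      (x₀ + c * ∫ s in (0:ℝ)..t, (t - s) ^ (α - 1) * g s)) (Set.Icc 0 T) :=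
    h2.continuousOn.congr (fun t ht => by rw [subst_lemma hα g ht.1])
  exact h1.restrict

lemma contract_est {α : ℝ} (hα : 0 < α) {lam t K0 d : ℝ} (hlam : 0 < lam) (ht : 0 ≤ t)
    (hK0 : 0 ≤ K0) (hd : 0 ≤ d) {g₁ g₂ : ℝ → ℝ} (hg₁ : Continuous g₁) (hg₂ : Continuous g₂)
    (hdiff : ∀ s, 0 ≤ s → s ≤ t → |g₁ s - g₂ s| ≤ K0 * Real.exp (lam * s) * d) :
    |(∫ s in (0:ℝ)..t, (t - s) ^ (α - 1) * g₁ s) - ∫ s in (0:ℝ)..t, (t - s) ^ (α - 1) * g₂ s|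
      ≤ K0 * d * (Real.exp (lam * t) * Real.Gamma α / lam ^ α) := by
  rw [subst_lemma hα g₁ ht, subst_lemma hα g₂ ht, ← mul_sub,
    ← intervalIntegral.integral_sub (prod_intable hα hg₁ t) (prod_intable hα hg₂ t)]
  have htα : (0:ℝ) ≤ t ^ α := Real.rpow_nonneg ht _
  rw [abs_mul, abs_of_nonneg htα]
  have key : |∫ u in (0:ℝ)..1, ((1 - u) ^ (α - 1) * g₁ (t * u) - (1 - u) ^ (α - 1) * g₂ (t * u))|
      ≤ ∫ u in (0:ℝ)..1, (1 - u) ^ (α - 1) * (K0 * d * Real.exp (lam * (t * u))) := by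
    apply (intervalIntegral.abs_integral_le_integral_abs zero_le_one).trans
    apply intervalIntegral.integral_mono_on zero_le_one
    · exact ((prod_intable hα hg₁ t).sub (prod_intable hα hg₂ t)).abs
    · exact prod_intable hα (g := fun s => K0 * d * Real.exp (lam * s)) (by fun_prop) t
    · intro u hu
      have h1u : (0:ℝ) ≤ 1 - u := by linarith [hu.2]
      have hker : (0:ℝ) ≤ (1 - u) ^ (α - 1) := Real.rpow_nonneg h1u _
      rw [← mul_sub, abs_mul, abs_of_nonneg hker]
      apply mul_le_mul_of_nonneg_left _ hker
      have h2 := hdiff (t * u) (mul_nonneg ht hu.1) (by nlinarith [hu.1, hu.2])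
      calc |g₁ (t * u) - g₂ (t * u)| ≤ K0 * Real.exp (lam * (t * u)) * d := h2
        _ = K0 * d * Real.exp (lam * (t * u)) := by ring
  calc t ^ α * |∫ u in (0:ℝ)..1, ((1 - u) ^ (α - 1) * g₁ (t * u) - (1 - u) ^ (α - 1) * g₂ (t * u))|
      ≤ t ^ α * ∫ u in (0:ℝ)..1, (1 - u) ^ (α - 1) * (K0 * d * Real.exp (lam * (t * u))) :=
        mul_le_mul_of_nonneg_left key htα
    _ = K0 * d * (t ^ α * ∫ u in (0:ℝ)..1, (1 - u) ^ (α - 1) * Real.exp (lam * (t * u))) := by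
        rw [show (fun u => (1 - u) ^ (α - 1) * (K0 * d * Real.exp (lam * (t * u))))
            = fun u => (K0 * d) * ((1 - u) ^ (α - 1) * Real.exp (lam * (t * u))) from
          funext fun u => by ring, intervalIntegral.integral_const_mul]
        ring
    _ = K0 * d * ∫ s in (0:ℝ)..t, (t - s) ^ (α - 1) * Real.exp (lam * s) := by
        rw [← subst_lemma hα (fun s => Real.exp (lam * s)) ht]
    _ ≤ K0 * d * (Real.exp (lam * t) * Real.Gamma α / lam ^ α) :=
        mul_le_mul_of_nonneg_left (exp_kernel_bound hα hlam ht) (mul_nonneg hK0 hd)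

/-- A continuous function `x` on `[0,T]` solves the Caputo fractional initial value
problem `^C D^α_{0+} x(t) = f(t,x(t))`, `x(0) = x₀`, in the equivalent Volterra
integral formulation. -/
def IsCaputoSolution (α T : ℝ) (f : ℝ → ℝ → ℝ) (x₀ : ℝ) (x : ℝ → ℝ) : Prop :=
  ContinuousOn x (Set.Icc 0 T) ∧
    ∀ t ∈ Set.Icc 0 T,
      x t = x₀ + (1 / Real.Gamma α) * ∫ s in (0:ℝ)..t, (t - s) ^ (α - 1) * f s (x s)

/-- Existence and uniqueness of the solution on `[0,T]` for continuous `f`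
satisfying a Lipschitz condition in the second variable. -/
theorem caputo_existence_uniqueness (α T : ℝ) (hα : 0 < α) (hα1 : α ≤ 1) (hT : 0 < T)
    (f : ℝ → ℝ → ℝ)
    (hf : ContinuousOn (fun p : ℝ × ℝ => f p.1 p.2) (Set.Icc 0 T ×ˢ Set.univ))
    (L : ℝ → ℝ) (hLc : ContinuousOn L (Set.Icc 0 T))
    (hLnn : ∀ t ∈ Set.Icc 0 T, 0 ≤ L t)
    (hLip : ∀ t ∈ Set.Icc 0 T, ∀ x y : ℝ, |f t x - f t y| ≤ L t * |x - y|)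
    (x₀ : ℝ) :
    ∃ x : ℝ → ℝ, IsCaputoSolution α T f x₀ x ∧
      ∀ y : ℝ → ℝ, IsCaputoSolution α T f x₀ y → ∀ t ∈ Set.Icc 0 T, y t = x t := by
  have hT0 : (0:ℝ) ≤ T := hT.le
  -- clamping map onto [0,T]
  set π : ℝ → ℝ := fun s => max 0 (min s T) with hπdef
  have hπmem : ∀ s, π s ∈ Set.Icc (0:ℝ) T :=
    fun s => ⟨le_max_left _ _, max_le hT0 (min_le_right _ _)⟩
  have hπc : Continuous π := continuous_const.max (continuous_id.min continuous_const)
  have hπeq : ∀ s ∈ Set.Icc (0:ℝ) T, π s = s := by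
    intro s hs
    simp only [hπdef]
    rw [min_eq_left hs.2, max_eq_right hs.1]
  set fc : ℝ → ℝ → ℝ := fun s z => f (π s) z with hfcdef
  have hfc : Continuous fun p : ℝ × ℝ => fc p.1 p.2 :=
    hf.comp_continuous ((hπc.comp continuous_fst).prodMk continuous_snd)
      (fun p => ⟨hπmem p.1, Set.mem_univ _⟩)
  -- maximum of L
  obtain ⟨s₀, hs₀, hmax⟩ := isCompact_Icc.exists_isMaxOn ⟨0, Set.left_mem_Icc.2 hT0⟩ hLc
  set K0 : ℝ := L s₀ with hK0def
  have hK0nn : 0 ≤ K0 := hLnn s₀ hs₀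
  have hfcLip : ∀ s z w, |fc s z - fc s w| ≤ K0 * |z - w| := by
    intro s z w
    calc |fc s z - fc s w| ≤ L (π s) * |z - w| := hLip (π s) (hπmem s) z w
      _ ≤ K0 * |z - w| := mul_le_mul_of_nonneg_right (hmax (hπmem s)) (abs_nonneg _)
  -- the Bielecki weight
  set lam : ℝ := (K0 + 1) ^ (α⁻¹) with hlamdef
  have hlam : 0 < lam := Real.rpow_pos_of_pos (by linarith) _
  have hlamα : lam ^ α = K0 + 1 := by
    rw [hlamdef, ← Real.rpow_mul (by linarith : (0:ℝ) ≤ K0 + 1),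
      inv_mul_cancel₀ hα.ne', Real.rpow_one]
  have hΓ : 0 < Real.Gamma α := Real.Gamma_pos_of_pos hα
  set K : ℝ := K0 / (K0 + 1) with hKdef
  have hKnn : 0 ≤ K := div_nonneg hK0nn (by linarith)
  have hK1 : K < 1 := by
    rw [hKdef, div_lt_one (by linarith)]; linarith
  -- the integrand functions
  have hgc : ∀ u : C(Set.Icc (0:ℝ) T, ℝ),
      Continuous fun s : ℝ => fc s (Real.exp (lam * s) * u (Set.projIcc 0 T hT0 s)) := by
    intro u
    exact hfc.comp (continuous_id.prodMk
      ((Real.continuous_exp.comp (continuous_const.mul continuous_id)).mul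
        (u.continuous.comp continuous_projIcc)))
  -- the Picard operator
  set Φ : C(Set.Icc (0:ℝ) T, ℝ) → C(Set.Icc (0:ℝ) T, ℝ) := fun u =>
    ⟨fun τ => Real.exp (-(lam * ↑τ)) * (x₀ + (1 / Real.Gamma α) *
      ∫ s in (0:ℝ)..(↑τ:ℝ), ((↑τ:ℝ) - s) ^ (α - 1) *
        fc s (Real.exp (lam * s) * u (Set.projIcc 0 T hT0 s))),
      cont_body hα x₀ (1 / Real.Gamma α) lam (hgc u)⟩ with hΦdef
  -- contraction estimate
  have hdist : ∀ u v : C(Set.Icc (0:ℝ) T, ℝ), dist (Φ u) (Φ v) ≤ K * dist u v := by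
    intro u v
    rw [ContinuousMap.dist_le (mul_nonneg hKnn dist_nonneg)]
    intro τ
    rw [Real.dist_eq, hΦdef]
    simp only [ContinuousMap.coe_mk]
    have hIdiff : |(∫ s in (0:ℝ)..(↑τ:ℝ), ((↑τ:ℝ) - s) ^ (α - 1) *
          fc s (Real.exp (lam * s) * u (Set.projIcc 0 T hT0 s))) -
        ∫ s in (0:ℝ)..(↑τ:ℝ), ((↑τ:ℝ) - s) ^ (α - 1) *
          fc s (Real.exp (lam * s) * v (Set.projIcc 0 T hT0 s))|
        ≤ K0 * dist u v * (Real.exp (lam * ↑τ) * Real.Gamma α / lam ^ α) := by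
      apply contract_est hα hlam τ.2.1 hK0nn dist_nonneg (hgc u) (hgc v)
      intro s hs0 hsT'
      refine (hfcLip s _ _).trans ?_
      rw [← mul_sub, abs_mul, abs_of_nonneg (Real.exp_nonneg _), mul_assoc]
      apply mul_le_mul_of_nonneg_left _ hK0nn
      apply mul_le_mul_of_nonneg_left _ (Real.exp_nonneg _)
      rw [← Real.dist_eq]
      exact ContinuousMap.dist_apply_le_dist _
    set I₁ := ∫ s in (0:ℝ)..(↑τ:ℝ), ((↑τ:ℝ) - s) ^ (α - 1) *
      fc s (Real.exp (lam * s) * u (Set.projIcc 0 T hT0 s)) with hI₁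
    set I₂ := ∫ s in (0:ℝ)..(↑τ:ℝ), ((↑τ:ℝ) - s) ^ (α - 1) *
      fc s (Real.exp (lam * s) * v (Set.projIcc 0 T hT0 s)) with hI₂
    have hcancel : Real.exp (-(lam * ↑τ)) * Real.exp (lam * ↑τ) = 1 := by
      rw [← Real.exp_add]; simp
    calc |Real.exp (-(lam * ↑τ)) * (x₀ + (1 / Real.Gamma α) * I₁) -
            Real.exp (-(lam * ↑τ)) * (x₀ + (1 / Real.Gamma α) * I₂)|
        = Real.exp (-(lam * ↑τ)) * ((1 / Real.Gamma α) * |I₁ - I₂|) := by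
          rw [show Real.exp (-(lam * ↑τ)) * (x₀ + (1 / Real.Gamma α) * I₁) -
              Real.exp (-(lam * ↑τ)) * (x₀ + (1 / Real.Gamma α) * I₂)
              = Real.exp (-(lam * ↑τ)) * ((1 / Real.Gamma α) * (I₁ - I₂)) from by ring]
          rw [abs_mul, abs_mul, abs_of_nonneg (Real.exp_nonneg _),
            abs_of_nonneg (by positivity : (0:ℝ) ≤ 1 / Real.Gamma α)]
      _ ≤ Real.exp (-(lam * ↑τ)) * ((1 / Real.Gamma α) *
            (K0 * dist u v * (Real.exp (lam * ↑τ) * Real.Gamma α / lam ^ α))) := by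
          apply mul_le_mul_of_nonneg_left _ (Real.exp_nonneg _)
          exact mul_le_mul_of_nonneg_left hIdiff (by positivity)
      _ = (Real.exp (-(lam * ↑τ)) * Real.exp (lam * ↑τ)) * (Real.Gamma α / Real.Gamma α) *
            (K0 * dist u v / lam ^ α) := by ring
      _ = K * dist u v := by
          rw [hcancel, div_self hΓ.ne', one_mul, one_mul, hlamα, hKdef]; ring
  haveI : Nonempty C(Set.Icc (0:ℝ) T, ℝ) := ⟨⟨fun _ => 0, continuous_const⟩⟩
  have hcontr : ContractingWith ⟨K, hKnn⟩ Φ := by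
    constructor
    · exact (NNReal.coe_lt_coe (r₁ := ⟨K, hKnn⟩) (r₂ := 1)).mp hK1
    · exact LipschitzWith.of_dist_le_mul hdist
  set ustar := ContractingWith.fixedPoint Φ hcontr with hustardef
  have hfix : Φ ustar = ustar := ContractingWith.fixedPoint_isFixedPt hcontr
  refine ⟨fun t => Real.exp (lam * t) * ustar (Set.projIcc 0 T hT0 t), ⟨?_, ?_⟩, ?_⟩
  · exact ((Real.continuous_exp.comp (continuous_const.mul continuous_id)).mul
      (ustar.continuous.comp continuous_projIcc)).continuousOn
  · intro t ht
    dsimp only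
    rw [Set.projIcc_of_mem hT0 ht]
    have happ : (Φ ustar) ⟨t, ht⟩ = ustar ⟨t, ht⟩ := by rw [hfix]
    rw [← happ, hΦdef]
    simp only [ContinuousMap.coe_mk]
    rw [← mul_assoc, ← Real.exp_add, add_neg_cancel, Real.exp_zero, one_mul]
    congr 1
    congr 1
    apply intervalIntegral.integral_congr
    intro s hs
    rw [Set.uIcc_of_le ht.1] at hs
    have hsT : s ∈ Set.Icc (0:ℝ) T := ⟨hs.1, hs.2.trans ht.2⟩
    dsimp only
    rw [hfcdef]
    dsimp only
    rw [hπeq s hsT]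
  · intro y hy t ht
    have hvc : Continuous fun τ : Set.Icc (0:ℝ) T => Real.exp (-(lam * ↑τ)) * y ↑τ :=
      (Real.continuous_exp.comp (continuous_const.mul continuous_subtype_val).neg).mul
        hy.1.restrict
    set v : C(Set.Icc (0:ℝ) T, ℝ) := ⟨fun τ => Real.exp (-(lam * ↑τ)) * y ↑τ, hvc⟩ with hvdef
    have hfixv : Φ v = v := by
      apply ContinuousMap.ext
      intro τ
      rw [hΦdef]
      simp only [ContinuousMap.coe_mk]
      have hint : (∫ s in (0:ℝ)..(↑τ:ℝ), ((↑τ:ℝ) - s) ^ (α - 1) *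
            fc s (Real.exp (lam * s) * v (Set.projIcc 0 T hT0 s)))
          = ∫ s in (0:ℝ)..(↑τ:ℝ), ((↑τ:ℝ) - s) ^ (α - 1) * f s (y s) := by
        apply intervalIntegral.integral_congr
        intro s hs
        rw [Set.uIcc_of_le τ.2.1] at hs
        have hsT : s ∈ Set.Icc (0:ℝ) T := ⟨hs.1, hs.2.trans τ.2.2⟩
        dsimp only
        rw [Set.projIcc_of_mem hT0 hsT, hvdef]
        simp only [ContinuousMap.coe_mk]
        rw [hfcdef]
        dsimp only
        rw [hπeq s hsT, ← mul_assoc, ← Real.exp_add, add_neg_cancel, Real.exp_zero, one_mul]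
      rw [hint, ← hy.2 ↑τ τ.2, hvdef]
      simp only [ContinuousMap.coe_mk]
    have hveq : v = ustar := hcontr.fixedPoint_unique hfixv
    have hproj : Set.projIcc 0 T hT0 t = ⟨t, ht⟩ := Set.projIcc_of_mem hT0 ht
    dsimp only
    rw [hproj, ← hveq, hvdef]
    simp only [ContinuousMap.coe_mk]
    rw [← mul_assoc, ← Real.exp_add, add_neg_cancel, Real.exp_zero, one_mul]
end

section
/- Let α ∈ (0,1], T > 0, d ≥ 1, and let f : [0,T] × ℝ^d → ℝ^d be continuous and satisfy the vector-valued Lipschitz condition with continuous L : [0,T] → [0,∞). Let x₁ and x₂ be solutions on [0,T] of the Caputo fractional initial value problems with the same f and initial values x₁₀ ≠ x₂₀ in ℝ^d. Then for all t ∈ [0,T]: ‖x₁(t) − x₂(t)‖ ≤ ‖x₁₀ − x₂₀‖ · E_α(L*(t) t^α), where L*(t) := max_{τ ∈ [0,t]} L(τ). -/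
open Set intervalIntegral MeasureTheory Filter

/-! ### Auxiliary lemmas -/

lemma real_betaIntegral {a b : ℝ} (ha : 0 < a) (hb : 0 < b) :
    ∫ x in (0:ℝ)..1, x ^ (a - 1) * (1 - x) ^ (b - 1)
      = Real.Gamma a * Real.Gamma b / Real.Gamma (a + b) := by
  have hab : (0:ℝ) < a + b := by linarith
  have hG : Real.Gamma (a + b) ≠ 0 := (Real.Gamma_pos_of_pos hab).ne'
  have key := Complex.Gamma_mul_Gamma_eq_betaIntegral
      (s := (a:ℂ)) (t := (b:ℂ)) (by simpa using ha) (by simpa using hb)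
  have hbeta : Complex.betaIntegral (a:ℂ) (b:ℂ)
      = ((∫ x in (0:ℝ)..1, x ^ (a - 1) * (1 - x) ^ (b - 1) : ℝ) : ℂ) := by
    rw [Complex.betaIntegral, ← intervalIntegral.integral_ofReal]
    refine intervalIntegral.integral_congr fun x hx => ?_
    rw [uIcc_of_le (by norm_num : (0:ℝ) ≤ 1)] at hx
    push_cast
    rw [Complex.ofReal_cpow hx.1, Complex.ofReal_cpow (by linarith [hx.2])]
    push_cast
    ring
  rw [hbeta, ← Complex.ofReal_add, Complex.Gamma_ofReal, Complex.Gamma_ofReal,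
    Complex.Gamma_ofReal, ← Complex.ofReal_mul, ← Complex.ofReal_mul] at key
  have := Complex.ofReal_inj.mp key
  field_simp
  linarith [this]

lemma conv_rpow {a b s : ℝ} (ha : 0 < a) (hb : 0 < b) (hs : 0 < s) :
    ∫ τ in (0:ℝ)..s, (s - τ) ^ (a - 1) * τ ^ (b - 1)
      = Real.Gamma a * Real.Gamma b / Real.Gamma (a + b) * s ^ (a + b - 1) := by
  have h := intervalIntegral.smul_integral_comp_mul_right
    (a := (0:ℝ)) (b := 1) (f := fun τ => (s - τ) ^ (a - 1) * τ ^ (b - 1)) s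
  simp only [zero_mul, one_mul, smul_eq_mul] at h
  rw [← h]
  have hcong : ∀ x ∈ uIcc (0:ℝ) 1,
      (s - x * s) ^ (a - 1) * (x * s) ^ (b - 1)
        = (s ^ (a - 1) * s ^ (b - 1)) * (x ^ (b - 1) * (1 - x) ^ (a - 1)) := by
    intro x hx
    rw [uIcc_of_le (by norm_num : (0:ℝ) ≤ 1)] at hx
    have h1 : s - x * s = s * (1 - x) := by ring
    rw [h1, Real.mul_rpow hs.le (by linarith [hx.2]), Real.mul_rpow hx.1 hs.le]
    ring
  rw [intervalIntegral.integral_congr hcong, intervalIntegral.integral_const_mul,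
    real_betaIntegral hb ha]
  have hsum : s * (s ^ (a - 1) * s ^ (b - 1)) = s ^ (a + b - 1) := by
    nth_rewrite 1 [← Real.rpow_one s]
    rw [← Real.rpow_add hs, ← Real.rpow_add hs]
    congr 1
    ring
  rw [show b + a = a + b from add_comm b a]
  linear_combination (Real.Gamma b * Real.Gamma a / Real.Gamma (a + b)) * hsum

/-- Log-convexity consequence: `x·Γ(x) ≤ Γ(x+α)·(x+α)^(1-α)` for `x > 0`, `0 < α ≤ 1`. -/
lemma gamma_shift {α x : ℝ} (hα : 0 < α) (hα1 : α ≤ 1) (hx : 0 < x) :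
    x * Real.Gamma x ≤ Real.Gamma (x + α) * (x + α) ^ (1 - α) := by
  have hxα : 0 < x + α := by linarith
  have h1 : x + 1 = α • (x + α) + (1 - α) • (x + α + 1) := by simp [smul_eq_mul]; ring
  have hcv := Real.convexOn_log_Gamma.2 (mem_Ioi.2 hxα) (mem_Ioi.2 (by linarith : (0:ℝ) < x + α + 1))
    hα.le (by linarith : (0:ℝ) ≤ 1 - α) (by ring)
  rw [← h1] at hcv
  have hG1 : Real.Gamma (x + α + 1) = (x + α) * Real.Gamma (x + α) := Real.Gamma_add_one hxα.ne'
  simp only [Function.comp_apply, smul_eq_mul] at hcv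
  rw [hG1, Real.log_mul hxα.ne' (Real.Gamma_pos_of_pos hxα).ne'] at hcv
  have hcv2 : Real.log (Real.Gamma (x + 1))
      ≤ Real.log (Real.Gamma (x + α)) + (1 - α) * Real.log (x + α) := by nlinarith [hcv]
  have hmono := Real.exp_le_exp.2 hcv2
  have hrw : Real.exp (Real.log (Real.Gamma (x + α)) + (1 - α) * Real.log (x + α))
      = Real.Gamma (x + α) * (x + α) ^ (1 - α) := by
    rw [Real.exp_add, Real.exp_log (Real.Gamma_pos_of_pos hxα),
      Real.rpow_def_of_pos hxα, mul_comm (Real.log (x + α))]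
  rw [hrw, Real.exp_log (Real.Gamma_pos_of_pos (by linarith : (0:ℝ) < x + 1)),
    Real.Gamma_add_one hx.ne'] at hmono
  exact hmono

/-- The Mittag-Leffler series is summable for nonnegative arguments. -/
lemma ml_summable {α : ℝ} (hα : 0 < α) (hα1 : α ≤ 1) {z : ℝ} (hz : 0 ≤ z) :
    Summable (fun k : ℕ => z ^ k / Real.Gamma (α * k + 1)) := by
  rcases eq_or_lt_of_le hz with hz0 | hz0
  · apply summable_of_ne_finset_zero (s := {0})
    intro k hk
    simp only [Finset.mem_singleton] at hk
    simp [← hz0, zero_pow hk]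
  · have hxpos : ∀ k : ℕ, (0:ℝ) < α * k + 1 := fun k => by positivity
    have hpos : ∀ k : ℕ, 0 < z ^ k / Real.Gamma (α * k + 1) := fun k =>
      div_pos (pow_pos hz0 k) (Real.Gamma_pos_of_pos (hxpos k))
    refine summable_of_ratio_test_tendsto_lt_one (l := 0) one_pos
      (Filter.Eventually.of_forall fun n => (hpos n).ne') ?_
    have hbound : ∀ k : ℕ, ‖z ^ (k+1) / Real.Gamma (α * (k+1 : ℕ) + 1)‖
        / ‖z ^ k / Real.Gamma (α * k + 1)‖ ≤ 2 * z * (α * k + 1) ^ (-α) := by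
      intro k
      set x : ℝ := α * k + 1 with hxdef
      have hx : 0 < x := hxpos k
      have hx1 : 1 ≤ x := by
        have : (0:ℝ) ≤ α * k := by positivity
        linarith
      have harg : α * ((k:ℝ) + 1) + 1 = x + α := by rw [hxdef]; ring
      have hgs := gamma_shift hα hα1 hx
      have hxα : 0 < x + α := by linarith
      have hGx : 0 < Real.Gamma x := Real.Gamma_pos_of_pos hx
      have hGxα : 0 < Real.Gamma (x + α) := Real.Gamma_pos_of_pos hxα
      have key : Real.Gamma x / Real.Gamma (x + α) ≤ 2 * x ^ (-α) := by
        have h2x : x + α ≤ 2 * x := by linarith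
        have hstep : Real.Gamma x / Real.Gamma (x + α) ≤ (x + α) ^ (1 - α) / x := by
          rw [div_le_div_iff₀ hGxα hx]
          nlinarith [hgs]
        refine hstep.trans ?_
        have h1 : (x + α) ^ (1 - α) ≤ (2*x) ^ (1 - α) :=
          Real.rpow_le_rpow hxα.le h2x (by linarith)
        have h2 : ((2:ℝ)*x) ^ (1-α) = 2 ^ (1-α) * x ^ (1-α) :=
          Real.mul_rpow (by norm_num) hx.le
        have h3 : (2:ℝ) ^ (1-α) ≤ 2 := by
          calc (2:ℝ) ^ (1-α) ≤ 2 ^ (1:ℝ) :=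
                Real.rpow_le_rpow_of_exponent_le (by norm_num) (by linarith)
            _ = 2 := Real.rpow_one 2
        have h4 : x ^ (1-α) / x = x ^ (-α) := by
          rw [Real.rpow_sub hx, Real.rpow_one, Real.rpow_neg hx.le]
          field_simp
        calc (x + α) ^ (1 - α) / x ≤ (2*x) ^ (1-α) / x := by gcongr
          _ = 2 ^ (1-α) * (x ^ (1-α) / x) := by rw [h2]; ring
          _ = 2 ^ (1-α) * x ^ (-α) := by rw [h4]
          _ ≤ 2 * x ^ (-α) := by
              have : (0:ℝ) ≤ x ^ (-α) := Real.rpow_nonneg hx.le _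
              nlinarith
      push_cast
      rw [harg]
      have lhs_eq : ‖z ^ (k+1) / Real.Gamma (x + α)‖ / ‖z ^ k / Real.Gamma x‖
          = z * (Real.Gamma x / Real.Gamma (x + α)) := by
        rw [norm_div, norm_div, norm_pow, norm_pow, Real.norm_of_nonneg hz,
          Real.norm_of_nonneg hGx.le, Real.norm_of_nonneg hGxα.le]
        field_simp
        ring
      rw [lhs_eq]
      calc z * (Real.Gamma x / Real.Gamma (x + α)) ≤ z * (2 * x ^ (-α)) :=
            mul_le_mul_of_nonneg_left key hz0.le
        _ = 2 * z * x ^ (-α) := by ring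
    have hnn : ∀ k : ℕ, 0 ≤ ‖z ^ (k+1) / Real.Gamma (α * (k+1 : ℕ) + 1)‖
        / ‖z ^ k / Real.Gamma (α * k + 1)‖ := fun k => by positivity
    have hg : Tendsto (fun k : ℕ => 2 * z * (α * k + 1) ^ (-α)) atTop (nhds 0) := by
      have h1 : Tendsto (fun k : ℕ => α * (k:ℝ) + 1) atTop atTop :=
        tendsto_atTop_add_const_right _ 1 (tendsto_natCast_atTop_atTop.const_mul_atTop hα)
      have h2 := (tendsto_rpow_neg_atTop hα).comp h1
      simpa using h2.const_mul (2*z)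
    exact squeeze_zero hnn hbound hg

lemma kernel_integrable {α s : ℝ} (hα : 0 < α) :
    IntervalIntegrable (fun τ => (s - τ) ^ (α - 1)) volume 0 s := by
  have h := (intervalIntegral.intervalIntegrable_rpow' (a := 0) (b := s)
    (by linarith : (-1:ℝ) < α - 1)).comp_sub_left s
  simpa using h.symm

lemma kernel_smul_integrable {E : Type*} [NormedAddCommGroup E] [NormedSpace ℝ E]
    {α s : ℝ} (hα : 0 < α) (hs : 0 ≤ s) {v : ℝ → E}
    (hv : ContinuousOn v (Icc 0 s)) :
    IntervalIntegrable (fun τ => (s - τ) ^ (α - 1) • v τ) volume 0 s := by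
  obtain ⟨C, hC⟩ := isCompact_Icc.exists_bound_of_continuousOn hv
  have hC0 : 0 ≤ C := le_trans (norm_nonneg _) (hC 0 ⟨le_rfl, hs⟩)
  have hker := kernel_integrable (s := s) hα
  refine ((hker.mul_const C).mono_fun ?_ ?_)
  · apply AEStronglyMeasurable.smul
    · exact (hker.aestronglyMeasurable).mono_measure
        (Measure.restrict_mono (by rw [uIoc_of_le hs]) le_rfl)
    · rw [uIoc_of_le hs]
      exact (hv.mono Ioc_subset_Icc_self).aestronglyMeasurable measurableSet_Ioc
  · rw [uIoc_of_le hs]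
    filter_upwards [ae_restrict_mem measurableSet_Ioc] with τ hτ
    have hk0 : (0:ℝ) ≤ (s - τ) ^ (α - 1) := Real.rpow_nonneg (by linarith [hτ.2]) _
    rw [norm_smul, Real.norm_of_nonneg hk0, Real.norm_of_nonneg (mul_nonneg hk0 hC0)]
    exact mul_le_mul_of_nonneg_left (hC τ ⟨hτ.1.le, hτ.2⟩) hk0

lemma kernel_mul_integrable {α s : ℝ} (hα : 0 < α) (hs : 0 ≤ s) {v : ℝ → ℝ}
    (hv : ContinuousOn v (Icc 0 s)) :
    IntervalIntegrable (fun τ => (s - τ) ^ (α - 1) * v τ) volume 0 s := by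
  simpa [smul_eq_mul] using kernel_smul_integrable hα hs hv

/-- The one-parameter Mittag-Leffler function `E_α(x) = ∑_{k=0}^∞ x^k / Γ(αk+1)`. -/
noncomputable def mittagLeffler (α x : ℝ) : ℝ :=
  ∑' k : ℕ, x ^ k / Real.Gamma (α * (k : ℝ) + 1)

/-- A continuous function `x : [0,T] → ℝ^d` solves the Caputo fractional initial value
problem `^C D^α_{0+} x(t) = f(t,x(t))`, `x(0) = x₀`, in the equivalent Volterra
integral formulation. -/
def IsCaputoSolutionVec {d : ℕ} (α T : ℝ)
    (f : ℝ → EuclideanSpace ℝ (Fin d) → EuclideanSpace ℝ (Fin d))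
    (x₀ : EuclideanSpace ℝ (Fin d)) (x : ℝ → EuclideanSpace ℝ (Fin d)) : Prop :=
  ContinuousOn x (Set.Icc 0 T) ∧
    ∀ t ∈ Set.Icc 0 T,
      x t = x₀ + (1 / Real.Gamma α) •
        ∫ s in (0:ℝ)..t, (t - s) ^ (α - 1) • f s (x s)

/-- Vector-valued upper bound for the separation of solutions:
`‖x₁(t) − x₂(t)‖ ≤ ‖x₁₀ − x₂₀‖ · E_α(L*(t)·t^α)` with `L*(t) = max_{τ∈[0,t]} L(τ)`. -/
theorem caputo_separation_upper_bound_vec (α T : ℝ) (hα : 0 < α) (hα1 : α ≤ 1)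
    (hT : 0 < T) (d : ℕ) (hd : 1 ≤ d)
    (f : ℝ → EuclideanSpace ℝ (Fin d) → EuclideanSpace ℝ (Fin d))
    (hf : ContinuousOn (fun p : ℝ × EuclideanSpace ℝ (Fin d) => f p.1 p.2)
      (Set.Icc 0 T ×ˢ Set.univ))
    (L : ℝ → ℝ) (hLc : ContinuousOn L (Set.Icc 0 T))
    (hLnn : ∀ t ∈ Set.Icc 0 T, 0 ≤ L t)
    (hLip : ∀ t ∈ Set.Icc 0 T, ∀ x y : EuclideanSpace ℝ (Fin d),
      ‖f t x - f t y‖ ≤ L t * ‖x - y‖)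
    (x₁₀ x₂₀ : EuclideanSpace ℝ (Fin d)) (hne : x₁₀ ≠ x₂₀)
    (x₁ x₂ : ℝ → EuclideanSpace ℝ (Fin d))
    (hx₁ : IsCaputoSolutionVec α T f x₁₀ x₁) (hx₂ : IsCaputoSolutionVec α T f x₂₀ x₂) :
    ∀ t ∈ Set.Icc 0 T,
      ‖x₁ t - x₂ t‖
        ≤ ‖x₁₀ - x₂₀‖ * mittagLeffler α (sSup (L '' Set.Icc 0 t) * t ^ α) := by
  intro t ht
  obtain ⟨ht0, htT⟩ := ht
  obtain ⟨hc₁, he₁⟩ := hx₁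
  obtain ⟨hc₂, he₂⟩ := hx₂
  have hΓα : 0 < Real.Gamma α := Real.Gamma_pos_of_pos hα
  set u : ℝ → ℝ := fun s => ‖x₁ s - x₂ s‖ with hu
  set u₀ : ℝ := ‖x₁₀ - x₂₀‖ with hu₀def
  have hu₀ : 0 ≤ u₀ := norm_nonneg _
  have hsub : Icc (0:ℝ) t ⊆ Icc 0 T := Icc_subset_Icc_right htT
  have huc : ContinuousOn u (Icc 0 T) := (hc₁.sub hc₂).norm
  have h1c : ContinuousOn (fun τ => f τ (x₁ τ)) (Icc 0 T) :=
    hf.comp (continuousOn_id.prodMk hc₁) fun τ hτ => ⟨hτ, mem_univ _⟩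
  have h2c : ContinuousOn (fun τ => f τ (x₂ τ)) (Icc 0 T) :=
    hf.comp (continuousOn_id.prodMk hc₂) fun τ hτ => ⟨hτ, mem_univ _⟩
  have hgc : ContinuousOn (fun τ => f τ (x₁ τ) - f τ (x₂ τ)) (Icc 0 T) := h1c.sub h2c
  set lam := sSup (L '' Icc 0 t) with hlamdef
  have hbdd : BddAbove (L '' Icc 0 t) :=
    (isCompact_Icc.image_of_continuousOn (hLc.mono hsub)).bddAbove
  have hlam_ge : ∀ τ ∈ Icc (0:ℝ) t, L τ ≤ lam := fun τ hτ => le_csSup hbdd ⟨τ, hτ, rfl⟩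
  have hlam0 : 0 ≤ lam := le_trans (hLnn 0 ⟨le_rfl, hT.le⟩) (hlam_ge 0 ⟨le_rfl, ht0⟩)
  obtain ⟨M, hM⟩ := isCompact_Icc.exists_bound_of_continuousOn (huc.mono hsub)
  have hMu : ∀ s ∈ Icc (0:ℝ) t, u s ≤ M := fun s hs =>
    (le_abs_self _).trans (by simpa [Real.norm_eq_abs] using hM s hs)
  have hM0 : 0 ≤ M := le_trans (norm_nonneg _) (hM 0 ⟨le_rfl, ht0⟩)
  -- Gamma positivity helpers
  have hΓk : ∀ k : ℕ, 0 < Real.Gamma (α * k + 1) := fun k =>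
    Real.Gamma_pos_of_pos (by positivity)
  -- The basic Gronwall-type integral inequality
  have key : ∀ s ∈ Icc (0:ℝ) t,
      u s ≤ u₀ + lam / Real.Gamma α * ∫ τ in (0:ℝ)..s, (s - τ) ^ (α - 1) * u τ := by
    intro s hs
    obtain ⟨hs0, hst⟩ := hs
    have hsT : s ≤ T := hst.trans htT
    have hsubs : Icc (0:ℝ) s ⊆ Icc 0 T := Icc_subset_Icc_right hsT
    have hI₁ : IntervalIntegrable (fun τ => (s - τ) ^ (α - 1) • f τ (x₁ τ)) volume 0 s :=
      kernel_smul_integrable hα hs0 (h1c.mono hsubs)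
    have hI₂ : IntervalIntegrable (fun τ => (s - τ) ^ (α - 1) • f τ (x₂ τ)) volume 0 s :=
      kernel_smul_integrable hα hs0 (h2c.mono hsubs)
    have heq : x₁ s - x₂ s = (x₁₀ - x₂₀) + (1 / Real.Gamma α) •
        ∫ τ in (0:ℝ)..s, (s - τ) ^ (α - 1) • (f τ (x₁ τ) - f τ (x₂ τ)) := by
      have hsplit : (∫ τ in (0:ℝ)..s, (s - τ) ^ (α - 1) • (f τ (x₁ τ) - f τ (x₂ τ)))
          = (∫ τ in (0:ℝ)..s, (s - τ) ^ (α - 1) • f τ (x₁ τ))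
            - ∫ τ in (0:ℝ)..s, (s - τ) ^ (α - 1) • f τ (x₂ τ) := by
        rw [← intervalIntegral.integral_sub hI₁ hI₂]
        congr 1
        funext τ
        rw [smul_sub]
      rw [hsplit, he₁ s ⟨hs0, hsT⟩, he₂ s ⟨hs0, hsT⟩, smul_sub]
      abel
    have hnorm2 : ‖∫ τ in (0:ℝ)..s, (s - τ) ^ (α - 1) • (f τ (x₁ τ) - f τ (x₂ τ))‖
        ≤ ∫ τ in (0:ℝ)..s, (s - τ) ^ (α - 1) * (lam * u τ) := by
      refine (intervalIntegral.norm_integral_le_integral_norm hs0).trans ?_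
      have hcong : ∀ τ ∈ uIcc (0:ℝ) s,
          ‖(s - τ) ^ (α - 1) • (f τ (x₁ τ) - f τ (x₂ τ))‖
            = (s - τ) ^ (α - 1) * ‖f τ (x₁ τ) - f τ (x₂ τ)‖ := by
        intro τ hτ
        rw [uIcc_of_le hs0] at hτ
        rw [norm_smul, Real.norm_of_nonneg (Real.rpow_nonneg (by linarith [hτ.2]) _)]
      rw [intervalIntegral.integral_congr hcong]
      refine intervalIntegral.integral_mono_on hs0
        (kernel_mul_integrable hα hs0 ((hgc.mono hsubs).norm))
        (kernel_mul_integrable hα hs0 (continuousOn_const.mul (huc.mono hsubs))) ?_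
      intro τ hτ
      have hk0 : (0:ℝ) ≤ (s - τ) ^ (α - 1) := Real.rpow_nonneg (by linarith [hτ.2]) _
      refine mul_le_mul_of_nonneg_left ?_ hk0
      refine (hLip τ (hsubs hτ) _ _).trans ?_
      exact mul_le_mul_of_nonneg_right (hlam_ge τ ⟨hτ.1, hτ.2.trans hst⟩) (norm_nonneg _)
    have hfin : ∫ τ in (0:ℝ)..s, (s - τ) ^ (α - 1) * (lam * u τ)
        = lam * ∫ τ in (0:ℝ)..s, (s - τ) ^ (α - 1) * u τ := by
      rw [← intervalIntegral.integral_const_mul]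
      congr 1
      funext τ
      ring
    calc u s = ‖x₁ s - x₂ s‖ := rfl
      _ ≤ u₀ + ‖(1 / Real.Gamma α) •
            ∫ τ in (0:ℝ)..s, (s - τ) ^ (α - 1) • (f τ (x₁ τ) - f τ (x₂ τ))‖ := by
          rw [heq]; exact norm_add_le _ _
      _ = u₀ + (1 / Real.Gamma α) *
            ‖∫ τ in (0:ℝ)..s, (s - τ) ^ (α - 1) • (f τ (x₁ τ) - f τ (x₂ τ))‖ := by
          rw [norm_smul, Real.norm_of_nonneg (by positivity)]
      _ ≤ u₀ + (1 / Real.Gamma α) * ∫ τ in (0:ℝ)..s, (s - τ) ^ (α - 1) * (lam * u τ) := by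
          have h1Γ : (0:ℝ) ≤ 1 / Real.Gamma α := by positivity
          nlinarith [mul_le_mul_of_nonneg_left hnorm2 h1Γ]
      _ = u₀ + lam / Real.Gamma α * ∫ τ in (0:ℝ)..s, (s - τ) ^ (α - 1) * u τ := by
          rw [hfin]; ring
  -- value of the convolution integrals
  have hJ : ∀ (s : ℝ), 0 < s → ∀ k : ℕ,
      ∫ τ in (0:ℝ)..s, (s - τ) ^ (α - 1) * τ ^ (α * k)
        = Real.Gamma α * Real.Gamma (α * k + 1) / Real.Gamma (α * ((k:ℝ) + 1) + 1)
            * s ^ (α * ((k:ℝ) + 1)) := by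
    intro s hs k
    have hb : (0:ℝ) < α * k + 1 := by positivity
    have h := conv_rpow (a := α) (b := α * k + 1) hα hb hs
    simp only [add_sub_cancel_right] at h
    rw [h, show α + (α * (k:ℝ) + 1) = α * ((k:ℝ) + 1) + 1 by ring,
      show α * ((k:ℝ) + 1) + 1 - 1 = α * ((k:ℝ) + 1) by ring]
  -- the iterated bound
  have claim : ∀ n : ℕ, ∀ s ∈ Icc (0:ℝ) t,
      u s ≤ u₀ * (∑ k ∈ Finset.range n, lam ^ k * s ^ (α * k) / Real.Gamma (α * k + 1))
        + M * lam ^ n * s ^ (α * n) / Real.Gamma (α * n + 1) := by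
    intro n
    induction n with
    | zero =>
      intro s hs
      simpa [Real.Gamma_one] using hMu s hs
    | succ n ih =>
      intro s hs
      obtain ⟨hs0, hst⟩ := hs
      rcases eq_or_lt_of_le hs0 with hseq | hspos
      · -- s = 0
        have hu00 : u 0 = u₀ := by
          have e1 := he₁ 0 ⟨le_rfl, hT.le⟩
          have e2 := he₂ 0 ⟨le_rfl, hT.le⟩
          simp only [intervalIntegral.integral_same, smul_zero, add_zero] at e1 e2
          rw [hu]
          simp only [e1, e2, hu₀def]
        have hterm0 : (1:ℝ) ≤ ∑ k ∈ Finset.range (n+1),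
            lam ^ k * (0:ℝ) ^ (α * k) / Real.Gamma (α * k + 1) := by
          have h0 : lam ^ (0:ℕ) * (0:ℝ) ^ (α * (0:ℕ)) / Real.Gamma (α * (0:ℕ) + 1) = 1 := by
            simp [Real.Gamma_one]
          refine h0.symm.trans_le (Finset.single_le_sum
            (f := fun k : ℕ => lam ^ k * (0:ℝ) ^ (α * k) / Real.Gamma (α * k + 1))
            (fun k _ => div_nonneg (mul_nonneg (pow_nonneg hlam0 _)
              (Real.rpow_nonneg le_rfl _)) (hΓk k).le)
            (Finset.mem_range.2 (Nat.succ_pos n)))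
        have hMterm : 0 ≤ M * lam ^ (n+1) * (0:ℝ) ^ (α * (n+1:ℕ)) / Real.Gamma (α * (n+1:ℕ) + 1) :=
          div_nonneg (mul_nonneg (mul_nonneg hM0 (pow_nonneg hlam0 _))
            (Real.rpow_nonneg le_rfl _)) (hΓk (n+1)).le
        rw [← hseq, hu00]
        nlinarith [mul_le_mul_of_nonneg_left hterm0 hu₀]
      · -- 0 < s
        have hs' : s ∈ Icc (0:ℝ) t := ⟨hs0, hst⟩
        have hks := key s hs'
        set B : ℝ → ℝ := fun τ =>
          (∑ k ∈ Finset.range n, u₀ * lam ^ k * τ ^ (α * k) / Real.Gamma (α * k + 1))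
            + M * lam ^ n * τ ^ (α * n) / Real.Gamma (α * n + 1) with hBdef
        have hBc : Continuous B := by
          apply Continuous.add
          · exact continuous_finset_sum _ fun k _ =>
              (continuous_const.mul (Real.continuous_rpow_const (by positivity))).div_const _
          · exact (continuous_const.mul (Real.continuous_rpow_const (by positivity))).div_const _
        have huB : ∀ τ ∈ Icc (0:ℝ) t, u τ ≤ B τ := by
          intro τ hτ
          refine (ih τ hτ).trans_eq ?_
          rw [hBdef]
          simp only [Finset.mul_sum]
          congr 1
          exact Finset.sum_congr rfl fun k _ => by ring
        have hmono2 : (∫ τ in (0:ℝ)..s, (s - τ) ^ (α - 1) * u τ)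
            ≤ ∫ τ in (0:ℝ)..s, (s - τ) ^ (α - 1) * B τ := by
          refine intervalIntegral.integral_mono_on hs0
            (kernel_mul_integrable hα hs0 (huc.mono (Icc_subset_Icc_right (hst.trans htT))))
            (kernel_mul_integrable hα hs0 hBc.continuousOn) ?_
          intro τ hτ
          exact mul_le_mul_of_nonneg_left (huB τ ⟨hτ.1, hτ.2.trans hst⟩)
            (Real.rpow_nonneg (by linarith [hτ.2]) _)
        have hint : ∀ k : ℕ,
            IntervalIntegrable (fun τ => (s - τ) ^ (α - 1) * τ ^ (α * k)) volume 0 s :=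
          fun k => kernel_mul_integrable hα hs0
            (Real.continuous_rpow_const (by positivity)).continuousOn
        have hsplit : ∀ τ : ℝ, (s - τ) ^ (α - 1) * B τ
            = (∑ k ∈ Finset.range n, (u₀ * lam ^ k / Real.Gamma (α * k + 1))
                  * ((s - τ) ^ (α - 1) * τ ^ (α * k)))
              + (M * lam ^ n / Real.Gamma (α * n + 1)) * ((s - τ) ^ (α - 1) * τ ^ (α * n)) := by
          intro τ
          rw [hBdef]
          simp only [mul_add, Finset.mul_sum]
          congr 1
          · exact Finset.sum_congr rfl fun k _ => by ring
          · ring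
        have hIB : (∫ τ in (0:ℝ)..s, (s - τ) ^ (α - 1) * B τ)
            = (∑ k ∈ Finset.range n, (u₀ * lam ^ k / Real.Gamma (α * k + 1))
                  * (Real.Gamma α * Real.Gamma (α * k + 1) / Real.Gamma (α * ((k:ℝ) + 1) + 1)
                      * s ^ (α * ((k:ℝ) + 1))))
              + (M * lam ^ n / Real.Gamma (α * n + 1))
                  * (Real.Gamma α * Real.Gamma (α * n + 1) / Real.Gamma (α * ((n:ℝ) + 1) + 1)
                      * s ^ (α * ((n:ℝ) + 1))) := by
          rw [intervalIntegral.integral_congr (fun τ _ => hsplit τ)]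
          have hsumInt : IntervalIntegrable (fun τ => ∑ k ∈ Finset.range n,
              (u₀ * lam ^ k / Real.Gamma (α * k + 1))
                * ((s - τ) ^ (α - 1) * τ ^ (α * k))) volume 0 s := by
            have := IntervalIntegrable.sum (μ := volume) (a := (0:ℝ)) (b := s)
              (Finset.range n)
              (f := fun (k : ℕ) (τ : ℝ) => (u₀ * lam ^ k / Real.Gamma (α * k + 1))
                * ((s - τ) ^ (α - 1) * τ ^ (α * k)))
              (fun k _ => (hint k).const_mul _)
            simpa only [Finset.sum_fn] using this
          rw [intervalIntegral.integral_add hsumInt ((hint n).const_mul _)]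
          rw [intervalIntegral.integral_finset_sum (fun k _ => (hint k).const_mul _)]
          simp_rw [intervalIntegral.integral_const_mul]
          congr 1
          · exact Finset.sum_congr rfl fun k _ => by rw [hJ s hspos k]
          · rw [hJ s hspos n]
        have hGne : ∀ k : ℕ, Real.Gamma (α * k + 1) ≠ 0 := fun k => (hΓk k).ne'
        have hGne' : ∀ r : ℝ, 0 < r → Real.Gamma (r + 1) ≠ 0 := fun r hr =>
          (Real.Gamma_pos_of_pos (by linarith)).ne'
        have hfinal : u₀ + lam / Real.Gamma α * (∫ τ in (0:ℝ)..s, (s - τ) ^ (α - 1) * B τ)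
            = u₀ * (∑ k ∈ Finset.range (n+1),
                  lam ^ k * s ^ (α * k) / Real.Gamma (α * k + 1))
              + M * lam ^ (n+1) * s ^ (α * (n+1:ℕ)) / Real.Gamma (α * (n+1:ℕ) + 1) := by
          rw [hIB, Finset.sum_range_succ'
            (fun k => lam ^ k * s ^ (α * (k:ℕ)) / Real.Gamma (α * (k:ℕ) + 1)) n]
          rw [mul_add (lam / Real.Gamma α), Finset.mul_sum]
          rw [mul_add u₀, Finset.mul_sum]
          have hterm : ∀ k : ℕ,
              lam / Real.Gamma α * ((u₀ * lam ^ k / Real.Gamma (α * k + 1))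
                  * (Real.Gamma α * Real.Gamma (α * k + 1) / Real.Gamma (α * ((k:ℝ) + 1) + 1)
                      * s ^ (α * ((k:ℝ) + 1))))
                = u₀ * (lam ^ (k+1) * s ^ (α * ((k+1:ℕ):ℝ)) / Real.Gamma (α * ((k+1:ℕ):ℝ) + 1)) := by
            intro k
            have hck : ((k+1:ℕ):ℝ) = (k:ℝ) + 1 := by push_cast; ring
            rw [hck]
            have hne := (Real.Gamma_pos_of_pos (show (0:ℝ) < α * ((k:ℝ)+1) + 1 by positivity)).ne'
            field_simp
            ring
          have hterm2 :
              lam / Real.Gamma α * ((M * lam ^ n / Real.Gamma (α * n + 1))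
                  * (Real.Gamma α * Real.Gamma (α * n + 1) / Real.Gamma (α * ((n:ℝ) + 1) + 1)
                      * s ^ (α * ((n:ℝ) + 1))))
                = M * lam ^ (n+1) * s ^ (α * ((n+1:ℕ):ℝ)) / Real.Gamma (α * ((n+1:ℕ):ℝ) + 1) := by
            have hck : ((n+1:ℕ):ℝ) = (n:ℝ) + 1 := by push_cast; ring
            rw [hck]
            have hne := (Real.Gamma_pos_of_pos (show (0:ℝ) < α * ((n:ℝ)+1) + 1 by positivity)).ne'
            field_simp
            ring
          rw [hterm2]
          rw [Finset.sum_congr rfl (fun k _ => hterm k)]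
          have hzero : lam ^ (0:ℕ) * s ^ (α * ((0:ℕ):ℝ)) / Real.Gamma (α * ((0:ℕ):ℝ) + 1) = 1 := by
            simp [Real.Gamma_one]
          rw [hzero]
          ring
        calc u s ≤ u₀ + lam / Real.Gamma α * ∫ τ in (0:ℝ)..s, (s - τ) ^ (α - 1) * u τ := hks
          _ ≤ u₀ + lam / Real.Gamma α * ∫ τ in (0:ℝ)..s, (s - τ) ^ (α - 1) * B τ := by
              have : (0:ℝ) ≤ lam / Real.Gamma α := by positivity
              nlinarith [mul_le_mul_of_nonneg_left hmono2 this]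
          _ = _ := hfinal
  -- pass to the limit
  have hz : (0:ℝ) ≤ lam * t ^ α := mul_nonneg hlam0 (Real.rpow_nonneg ht0 _)
  have hsumm := ml_summable hα hα1 hz
  have hpow : ∀ k : ℕ, lam ^ k * t ^ (α * k) = (lam * t ^ α) ^ k := by
    intro k
    have h1 : t ^ (α * (k:ℝ)) = (t ^ α) ^ (k:ℕ) := by
      rw [Real.rpow_mul ht0, Real.rpow_natCast]
    rw [h1, mul_pow]
  have hclaim' : ∀ n : ℕ, u t ≤ u₀ * mittagLeffler α (lam * t ^ α)
      + M * ((lam * t ^ α) ^ n / Real.Gamma (α * n + 1)) := by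
    intro n
    have h := claim n t ⟨ht0, le_rfl⟩
    have hsum : (∑ k ∈ Finset.range n, lam ^ k * t ^ (α * k) / Real.Gamma (α * k + 1))
        ≤ mittagLeffler α (lam * t ^ α) := by
      rw [mittagLeffler]
      refine le_trans (le_of_eq (Finset.sum_congr rfl fun k _ => by rw [hpow k])) ?_
      exact Summable.sum_le_tsum _ (fun k _ => div_nonneg (pow_nonneg hz k) (hΓk k).le) hsumm
    have hMeq : M * lam ^ n * t ^ (α * n) / Real.Gamma (α * n + 1)
        = M * ((lam * t ^ α) ^ n / Real.Gamma (α * n + 1)) := by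
      rw [← hpow n]; ring
    calc u t ≤ u₀ * (∑ k ∈ Finset.range n, lam ^ k * t ^ (α * k) / Real.Gamma (α * k + 1))
          + M * lam ^ n * t ^ (α * n) / Real.Gamma (α * n + 1) := h
      _ ≤ u₀ * mittagLeffler α (lam * t ^ α)
          + M * ((lam * t ^ α) ^ n / Real.Gamma (α * n + 1)) := by
          rw [hMeq]
          exact add_le_add_left (mul_le_mul_of_nonneg_left hsum hu₀) _
  have hlim : Tendsto (fun n : ℕ => u₀ * mittagLeffler α (lam * t ^ α)
      + M * ((lam * t ^ α) ^ n / Real.Gamma (α * n + 1))) atTop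
      (nhds (u₀ * mittagLeffler α (lam * t ^ α))) := by
    have h2 := (hsumm.tendsto_atTop_zero).const_mul M
    simpa using tendsto_const_nhds.add h2
  exact ge_of_tendsto' hlim hclaim'
end
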